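/- Define F : ℂ² → ℝ³ by F(z,w) = (1/4)(|z|² − |w|², 2·Re(w·conj z), 2·Im(w·conj z)). For any vectors e₁,…,eₙ ∈ ℝ³ with e₁ + ⋯ + eₙ = 0, there exists a 2×n complex matrix A such that A·A* is a real scalar multiple of the 2×2 identity matrix and F(Cᵢ) = eᵢ for each i, where Cᵢ ∈ ℂ² is the i-th column of A. -/

import Mathlib

/-- The (scaled) Hopf map `F : ℂ² → ℝ³` on column vectors,
`F(z,w) = (1/4)(|z|² − |w|², 2·Re(w·conj z), 2·Im(w·conj z))`. -/
noncomputable def hopfF (v : Fin 2 → ℂ) : Fin 3 → ℝ :=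
  ![(‖v 0‖ ^ 2 - ‖v 1‖ ^ 2) / 4,
    2 * (v 1 * (starRingEnd ℂ) (v 0)).re / 4,
    2 * (v 1 * (starRingEnd ℂ) (v 0)).im / 4]

noncomputable def liftRho (e : Fin 3 → ℝ) : ℝ := Real.sqrt (e 0^2 + e 1^2 + e 2^2)

noncomputable def liftZ (e : Fin 3 → ℝ) : ℝ := Real.sqrt (2*(liftRho e + e 0))

noncomputable def liftVec (e : Fin 3 → ℝ) : Fin 2 → ℂ :=
  ![(liftZ e : ℂ),
    if liftZ e = 0 then ((Real.sqrt (2*(liftRho e - e 0)) : ℝ) : ℂ)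
    else (2*((e 1 : ℂ) + (e 2 : ℂ) * Complex.I))/(liftZ e : ℂ)]

lemma liftRho_nonneg (e : Fin 3 → ℝ) : 0 ≤ liftRho e := Real.sqrt_nonneg _

lemma liftRho_sq (e : Fin 3 → ℝ) : liftRho e ^ 2 = e 0^2 + e 1^2 + e 2^2 := by
  exact Real.sq_sqrt (by positivity)

lemma abs_le_liftRho (e : Fin 3 → ℝ) : |e 0| ≤ liftRho e := by
  rw [← Real.sqrt_sq_eq_abs]
  exact Real.sqrt_le_sqrt (by nlinarith [sq_nonneg (e 1), sq_nonneg (e 2)])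

lemma liftRho_add_nonneg (e : Fin 3 → ℝ) : 0 ≤ liftRho e + e 0 := by
  have := abs_le_liftRho e; have := abs_le.mp this; linarith [this.1]

lemma liftRho_sub_nonneg (e : Fin 3 → ℝ) : 0 ≤ liftRho e - e 0 := by
  have := abs_le_liftRho e; have := abs_le.mp this; linarith [this.2]

lemma liftZ_nonneg (e : Fin 3 → ℝ) : 0 ≤ liftZ e := Real.sqrt_nonneg _

lemma liftZ_sq (e : Fin 3 → ℝ) : liftZ e ^ 2 = 2*(liftRho e + e 0) := by
  exact Real.sq_sqrt (by linarith [liftRho_add_nonneg e])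

lemma liftZ_eq_zero (e : Fin 3 → ℝ) (hz : liftZ e = 0) :
    liftRho e + e 0 = 0 ∧ e 1 = 0 ∧ e 2 = 0 := by
  have h1 : liftZ e ^ 2 = 0 := by rw [hz]; ring
  rw [liftZ_sq] at h1
  have hpa : liftRho e + e 0 = 0 := by linarith
  have hr : liftRho e = - e 0 := by linarith
  have hsq := liftRho_sq e
  rw [hr] at hsq
  have h12 : e 1 ^ 2 + e 2 ^ 2 = 0 := by nlinarith
  have he1 : e 1 = 0 := by nlinarith [sq_nonneg (e 1), sq_nonneg (e 2)]
  have he2 : e 2 = 0 := by nlinarith [sq_nonneg (e 1), sq_nonneg (e 2)]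
  exact ⟨hpa, he1, he2⟩

lemma liftVec_prod (e : Fin 3 → ℝ) :
    liftVec e 1 * (starRingEnd ℂ) (liftVec e 0)
      = 2*((e 1 : ℂ) + (e 2 : ℂ) * Complex.I) := by
  rcases eq_or_ne (liftZ e) 0 with hz | hz
  · obtain ⟨-, h1, h2⟩ := liftZ_eq_zero e hz
    simp [liftVec, hz, h1, h2]
  · have hzc : (liftZ e : ℂ) ≠ 0 := by exact_mod_cast hz
    simp only [liftVec, Matrix.cons_val_one, Matrix.head_cons, Matrix.cons_val_zero, if_neg hz,
      Complex.conj_ofReal]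
    field_simp

lemma liftVec_zero_sq (e : Fin 3 → ℝ) :
    liftVec e 0 * (starRingEnd ℂ) (liftVec e 0) = ((2*(liftRho e + e 0) : ℝ) : ℂ) := by
  simp only [liftVec, Matrix.cons_val_zero, Complex.conj_ofReal]
  rw [← Complex.ofReal_mul]
  norm_cast
  rw [← liftZ_sq]; ring

lemma liftVec_one_sq (e : Fin 3 → ℝ) :
    liftVec e 1 * (starRingEnd ℂ) (liftVec e 1) = ((2*(liftRho e - e 0) : ℝ) : ℂ) := by
  rcases eq_or_ne (liftZ e) 0 with hz | hz
  · obtain ⟨hpa, -, -⟩ := liftZ_eq_zero e hz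
    simp only [liftVec, Matrix.cons_val_one, Matrix.head_cons, Matrix.cons_val_zero, if_pos hz, Complex.conj_ofReal]
    rw [← Complex.ofReal_mul]
    norm_cast
    exact Real.mul_self_sqrt (by linarith [liftRho_sub_nonneg e])
  · have hzc : (liftZ e : ℂ) ≠ 0 := by exact_mod_cast hz
    have hz2 : liftZ e ^ 2 ≠ 0 := pow_ne_zero _ hz
    have hpa : liftRho e + e 0 ≠ 0 := by
      intro hh; apply hz2; rw [liftZ_sq, hh]; ring
    simp only [liftVec, Matrix.cons_val_one, Matrix.head_cons, Matrix.cons_val_zero, if_neg hz, map_div₀, map_mul,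
      Complex.conj_ofReal, map_ofNat, map_add, Complex.conj_I]
    rw [div_mul_div_comm]
    have : (2*((e 1 : ℂ) + (e 2 : ℂ) * Complex.I)) * (2*((e 1 : ℂ) + (e 2 : ℂ) * (-Complex.I)))
        = ((4*(e 1 ^2 + e 2 ^2) : ℝ) : ℂ) := by
      push_cast
      have hI := Complex.I_sq
      ring_nf
      rw [Complex.I_sq]
      ring
    rw [this, ← Complex.ofReal_mul, ← Complex.ofReal_div]
    congr 1
    have hzz : liftZ e * liftZ e = 2*(liftRho e + e 0) := by
      rw [← liftZ_sq]; ring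
    rw [hzz]
    have hrs := liftRho_sq e
    field_simp
    nlinarith [hrs]


/-- Every closed `n`-gon in `ℝ³` admits an imploded spin-framing: there is a `2×n` complex
matrix `A` with `A·A*` a real scalar multiple of the identity whose columns map to the
given edges under `F`. -/
theorem closed_ngon_lifts (n : ℕ) (e : Fin n → Fin 3 → ℝ) (h : ∑ i, e i = 0) :
    ∃ A : Matrix (Fin 2) (Fin n) ℂ,
      (∃ r : ℝ, A * A.conjTranspose = (r : ℂ) • 1) ∧
        ∀ i, hopfF (fun j => A j i) = e i := by
  have h0 : ∑ i, e i 0 = 0 := by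
    have := congrFun h 0; simpa using this
  have h1 : ∑ i, e i 1 = 0 := by
    have := congrFun h 1; simpa using this
  have h2 : ∑ i, e i 2 = 0 := by
    have := congrFun h 2; simpa using this
  have hsum : ∑ i, (2*((e i 1 : ℂ) + (e i 2 : ℂ) * Complex.I)) = 0 := by
    have : ∑ i, (2*((e i 1 : ℂ) + (e i 2 : ℂ) * Complex.I))
        = 2*(((∑ i, e i 1 : ℝ) : ℂ) + ((∑ i, e i 2 : ℝ) : ℂ) * Complex.I) := by
      rw [Complex.ofReal_sum, Complex.ofReal_sum, Finset.sum_mul, ← Finset.sum_add_distrib,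
        Finset.mul_sum]
    rw [this, h1, h2]; simp
  refine ⟨Matrix.of fun j i => liftVec (e i) j, ⟨∑ i, 2*(liftRho (e i) + e i 0), ?_⟩, ?_⟩
  · ext j k
    fin_cases j <;> fin_cases k
    · simp only [Matrix.mul_apply, Matrix.conjTranspose_apply, Matrix.of_apply, Matrix.smul_apply,
        RCLike.star_def, Matrix.one_apply_eq, smul_eq_mul, mul_one, Fin.mk_zero, Fin.mk_one]
      rw [Complex.ofReal_sum]
      exact Finset.sum_congr rfl fun i _ => liftVec_zero_sq (e i)
    · simp only [Matrix.mul_apply, Matrix.conjTranspose_apply, Matrix.of_apply, Matrix.smul_apply,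
        RCLike.star_def, Fin.mk_zero, Fin.mk_one,
        Matrix.one_apply_ne (show (0 : Fin 2) ≠ 1 by decide), smul_zero]
      have key : ∀ i : Fin n, liftVec (e i) 0 * (starRingEnd ℂ) (liftVec (e i) 1)
          = (starRingEnd ℂ) (2*((e i 1 : ℂ) + (e i 2 : ℂ) * Complex.I)) := fun i => by
        rw [← liftVec_prod (e i), map_mul, Complex.conj_conj, mul_comm]
      rw [Finset.sum_congr rfl fun i _ => key i, ← map_sum, hsum, map_zero]
    · simp only [Matrix.mul_apply, Matrix.conjTranspose_apply, Matrix.of_apply, Matrix.smul_apply,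
        RCLike.star_def, Fin.mk_zero, Fin.mk_one,
        Matrix.one_apply_ne (show (1 : Fin 2) ≠ 0 by decide), smul_zero]
      rw [Finset.sum_congr rfl fun i _ => liftVec_prod (e i), hsum]
    · simp only [Matrix.mul_apply, Matrix.conjTranspose_apply, Matrix.of_apply, Matrix.smul_apply,
        RCLike.star_def, Matrix.one_apply_eq, smul_eq_mul, mul_one, Fin.mk_zero, Fin.mk_one]
      rw [Finset.sum_congr rfl fun i _ => liftVec_one_sq (e i), ← Complex.ofReal_sum]
      congr 1
      have key : ∀ i ∈ Finset.univ, (2*(liftRho (e i) - e i 0))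
          = 2*(liftRho (e i) + e i 0) - 4 * e i 0 := fun i _ => by ring
      rw [Finset.sum_congr rfl key, Finset.sum_sub_distrib, ← Finset.mul_sum, ← Finset.mul_sum, h0]
      ring
  · intro i
    have habs0 : ‖liftVec (e i) 0‖ ^ 2 = 2*(liftRho (e i) + e i 0) := by
      have := liftVec_zero_sq (e i)
      rw [Complex.mul_conj] at this
      rw [Complex.sq_norm]
      exact_mod_cast this
    have habs1 : ‖liftVec (e i) 1‖ ^ 2 = 2*(liftRho (e i) - e i 0) := by
      have := liftVec_one_sq (e i)
      rw [Complex.mul_conj] at this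
      rw [Complex.sq_norm]
      exact_mod_cast this
    funext j
    fin_cases j
    · show (‖liftVec (e i) 0‖ ^ 2 - ‖liftVec (e i) 1‖ ^ 2) / 4 = e i 0
      rw [habs0, habs1]; ring
    · show 2 * (liftVec (e i) 1 * (starRingEnd ℂ) (liftVec (e i) 0)).re / 4 = e i 1
      rw [liftVec_prod]
      simp [Complex.mul_re]
      ring
    · show 2 * (liftVec (e i) 1 * (starRingEnd ℂ) (liftVec (e i) 0)).im / 4 = e i 2
      rw [liftVec_prod]
      simp [Complex.mul_im]
      ring
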